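/- Let n be a positive integer, let x₁ ≤ x₂ ≤ … ≤ xₙ and y₁, …, yₙ be real numbers, let m_x and m_y be the means of the xᵢ and yᵢ respectively, and for 1 ≤ i ≤ n let Uᵢ = { j : 1 ≤ j < i, yⱼ < yᵢ }. Then D := Σ_{i=1}^{n} Σ_{j=1}^{n} |xᵢ − xⱼ|·|yᵢ − yⱼ| = 4·Σ_{i=1}^{n} Σ_{j ∈ Uᵢ} (xᵢ − xⱼ)·(yᵢ − yⱼ) − 2n·Σ_{i=1}^{n} (xᵢ − m_x)·(yᵢ − m_y). -/

import Mathlib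

/-- For `x` sorted nondecreasingly, means `m_x, m_y`, and `Uᵢ = { j : 1 ≤ j < i, yⱼ < yᵢ }`,
`D = Σᵢ Σⱼ |xᵢ − xⱼ|·|yᵢ − yⱼ|
   = 4·Σᵢ Σ_{j∈Uᵢ} (xᵢ − xⱼ)(yᵢ − yⱼ) − 2n·Σᵢ (xᵢ − m_x)(yᵢ − m_y)`. -/
theorem D_eq_four_sum_U_sub_two_n_centered
    (n : ℕ) (hn : 0 < n) (x y : ℕ → ℝ)
    (hsorted : ∀ i j : ℕ, 1 ≤ i → i ≤ j → j ≤ n → x i ≤ x j)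
    (mx my : ℝ)
    (hmx : mx = (∑ i ∈ Finset.Icc 1 n, x i) / n)
    (hmy : my = (∑ i ∈ Finset.Icc 1 n, y i) / n)
    (U : ℕ → Finset ℕ)
    (hU : ∀ i : ℕ, U i = (Finset.Ico 1 i).filter (fun j => y j < y i)) :
    ∑ i ∈ Finset.Icc 1 n, ∑ j ∈ Finset.Icc 1 n, |x i - x j| * |y i - y j|
      = 4 * ∑ i ∈ Finset.Icc 1 n, ∑ j ∈ U i, (x i - x j) * (y i - y j)
        - 2 * (n : ℝ) * ∑ i ∈ Finset.Icc 1 n, (x i - mx) * (y i - my) := by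
  have hn' : (n : ℝ) ≠ 0 := Nat.cast_ne_zero.mpr hn.ne'
  have hsym : ∀ g : ℕ → ℕ → ℝ, (∀ i j, g i j = g j i) → (∀ i, g i i = 0) →
      ∑ i ∈ Finset.Icc 1 n, ∑ j ∈ Finset.Icc 1 n, g i j
        = 2 * ∑ i ∈ Finset.Icc 1 n, ∑ j ∈ Finset.Ico 1 i, g i j := by
    intro g hg hgd
    have hsplit : ∀ i ∈ Finset.Icc 1 n, ∑ j ∈ Finset.Icc 1 n, g i j
        = ∑ j ∈ Finset.Ico 1 i, g i j
          + ∑ j ∈ (Finset.Icc 1 n).filter (fun j => ¬ j < i), g i j := by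
      intro i hi
      rw [← Finset.sum_filter_add_sum_filter_not (Finset.Icc 1 n) (fun j => j < i)]
      congr 2
      ext j
      have h2 := (Finset.mem_Icc.mp hi).2
      simp only [Finset.mem_filter, Finset.mem_Icc, Finset.mem_Ico]
      omega
    rw [Finset.sum_congr rfl hsplit, Finset.sum_add_distrib]
    have hswap : ∑ i ∈ Finset.Icc 1 n, ∑ j ∈ (Finset.Icc 1 n).filter (fun j => ¬ j < i), g i j
        = ∑ j ∈ Finset.Icc 1 n, ∑ i ∈ Finset.Ico 1 (j + 1), g i j := by
      refine Finset.sum_comm' ?_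
      intro i j
      simp only [Finset.mem_filter, Finset.mem_Icc, Finset.mem_Ico, not_lt]
      omega
    rw [hswap]
    have hstep : ∀ j ∈ Finset.Icc 1 n,
        ∑ i ∈ Finset.Ico 1 (j + 1), g i j = ∑ i ∈ Finset.Ico 1 j, g j i := by
      intro j hj
      have h1 := (Finset.mem_Icc.mp hj).1
      rw [Finset.sum_Ico_succ_top h1, hgd, add_zero]
      exact Finset.sum_congr rfl (fun i _ => hg i j)
    rw [Finset.sum_congr rfl hstep]
    ring
  have hA := hsym (fun i j => |x i - x j| * |y i - y j|)
    (fun i j => by rw [abs_sub_comm (x i), abs_sub_comm (y i)]) (fun i => by simp)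
  have hF := hsym (fun i j => (x i - x j) * (y i - y j))
    (fun i j => by ring) (fun i => by ring)
  -- pointwise identity below the diagonal
  have hpt : ∀ i ∈ Finset.Icc 1 n, ∀ j ∈ Finset.Ico 1 i,
      |x i - x j| * |y i - y j| + (x i - x j) * (y i - y j)
        = if y j < y i then 2 * ((x i - x j) * (y i - y j)) else 0 := by
    intro i hi j hj
    have hx : 0 ≤ x i - x j := sub_nonneg.mpr
      (hsorted j i (Finset.mem_Ico.mp hj).1 (le_of_lt (Finset.mem_Ico.mp hj).2)
        (Finset.mem_Icc.mp hi).2)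
    rw [abs_of_nonneg hx]
    by_cases h : y j < y i
    · rw [if_pos h, abs_of_nonneg (by linarith : (0:ℝ) ≤ y i - y j)]; ring
    · push_neg at h
      rw [if_neg (not_lt.mpr h), abs_of_nonpos (by linarith : y i - y j ≤ 0)]; ring
  -- key combination
  have key : (∑ i ∈ Finset.Icc 1 n, ∑ j ∈ Finset.Icc 1 n, |x i - x j| * |y i - y j|)
      + ∑ i ∈ Finset.Icc 1 n, ∑ j ∈ Finset.Icc 1 n, (x i - x j) * (y i - y j)
      = 4 * ∑ i ∈ Finset.Icc 1 n, ∑ j ∈ U i, (x i - x j) * (y i - y j) := by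
    rw [hA, hF, ← mul_add, ← Finset.sum_add_distrib]
    have : ∀ i ∈ Finset.Icc 1 n,
        (∑ j ∈ Finset.Ico 1 i, |x i - x j| * |y i - y j|)
          + ∑ j ∈ Finset.Ico 1 i, (x i - x j) * (y i - y j)
        = 2 * ∑ j ∈ U i, (x i - x j) * (y i - y j) := by
      intro i hi
      rw [← Finset.sum_add_distrib, Finset.sum_congr rfl (hpt i hi), hU i,
        Finset.sum_filter, Finset.mul_sum]
      exact Finset.sum_congr rfl (fun j _ => by split_ifs <;> ring)
    rw [Finset.sum_congr rfl this, ← Finset.mul_sum]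
    ring
  -- double centered sum
  have hcard : (Finset.Icc 1 n).card = n := by simp
  have hdouble : ∑ i ∈ Finset.Icc 1 n, ∑ j ∈ Finset.Icc 1 n, (x i - x j) * (y i - y j)
      = 2 * (n : ℝ) * (∑ i ∈ Finset.Icc 1 n, x i * y i)
        - 2 * (∑ i ∈ Finset.Icc 1 n, x i) * (∑ i ∈ Finset.Icc 1 n, y i) := by
    have inner : ∀ i ∈ Finset.Icc 1 n, ∑ j ∈ Finset.Icc 1 n, (x i - x j) * (y i - y j)
        = (n : ℝ) * (x i * y i) - x i * (∑ j ∈ Finset.Icc 1 n, y j)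
          - (∑ j ∈ Finset.Icc 1 n, x j) * y i + ∑ j ∈ Finset.Icc 1 n, x j * y j := by
      intro i _
      have e : ∀ j, (x i - x j) * (y i - y j)
          = x i * y i - x i * y j - x j * y i + x j * y j := fun j => by ring
      simp only [e]
      rw [Finset.sum_add_distrib, Finset.sum_sub_distrib, Finset.sum_sub_distrib,
        Finset.sum_const, hcard, ← Finset.mul_sum, ← Finset.sum_mul, nsmul_eq_mul]
    rw [Finset.sum_congr rfl inner]
    rw [Finset.sum_add_distrib, Finset.sum_sub_distrib, Finset.sum_sub_distrib,
      Finset.sum_const, hcard, ← Finset.mul_sum, ← Finset.sum_mul, ← Finset.mul_sum,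
      nsmul_eq_mul]
    ring
  have hexp : ∑ i ∈ Finset.Icc 1 n, (x i - mx) * (y i - my)
      = (∑ i ∈ Finset.Icc 1 n, x i * y i) - (∑ i ∈ Finset.Icc 1 n, x i) * my
        - mx * (∑ i ∈ Finset.Icc 1 n, y i) + (n : ℝ) * (mx * my) := by
    have e : ∀ i, (x i - mx) * (y i - my)
        = x i * y i - x i * my - mx * y i + mx * my := fun i => by ring
    simp only [e]
    rw [Finset.sum_add_distrib, Finset.sum_sub_distrib, Finset.sum_sub_distrib,
      Finset.sum_const, hcard, ← Finset.mul_sum, ← Finset.sum_mul, nsmul_eq_mul]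
  have hcenter : ∑ i ∈ Finset.Icc 1 n, ∑ j ∈ Finset.Icc 1 n, (x i - x j) * (y i - y j)
      = 2 * (n : ℝ) * ∑ i ∈ Finset.Icc 1 n, (x i - mx) * (y i - my) := by
    rw [hdouble, hexp, hmx, hmy]
    field_simp
    ring
  linarith [key, hcenter]
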